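/- In any nonempty RANS R, the center vertex is adjacent to all three outermost vertices, and every internal vertex of the sub-RANS S_i(R) has distance at least 2 to the opposite outermost vertex O_i(R), with distance exactly 1 + d(w, O(S_i(R))) where O(S_i(R)) is the set of outermost vertices of S_i(R). -/

import Mathlib

/-- Rooted plane ternary trees, modeling RANS. -/
inductive Tern : Type
  | leaf : Tern
  | node : Tern → Tern → Tern → Tern

/-- Internal vertices (positions of internal nodes) of a RANS. -/
def Pos : Tern → Type
  | .leaf => Empty
  | .node a b c => Unit ⊕ (Pos a ⊕ (Pos b ⊕ Pos c))

/-- Vertices of a RANS: the three outermost vertices plus the internal ones. -/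
def Vtx (t : Tern) : Type := Fin 3 ⊕ Pos t

/-- Embedding of the first sub-RANS: its outermost vertices are the center
and `O₂, O₃`. -/
def emb1 {a b c : Tern} : Vtx a → Vtx (Tern.node a b c) := fun x =>
  match x with
  | .inl i => if i = 0 then .inr (.inl ()) else .inl i
  | .inr p => .inr (.inr (.inl p))

/-- Embedding of the second sub-RANS: its outermost vertices are `O₁`, the
center and `O₃`. -/
def emb2 {a b c : Tern} : Vtx b → Vtx (Tern.node a b c) := fun x =>
  match x with
  | .inl i => if i = 1 then .inr (.inl ()) else .inl i
  | .inr p => .inr (.inr (.inr (.inl p)))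

/-- Embedding of the third sub-RANS: its outermost vertices are `O₁, O₂` and
the center. -/
def emb3 {a b c : Tern} : Vtx c → Vtx (Tern.node a b c) := fun x =>
  match x with
  | .inl i => if i = 2 then .inr (.inl ()) else .inl i
  | .inr p => .inr (.inr (.inr (.inr p)))

/-- Adjacency in a RANS: the empty RANS is the triangle on the outermost
vertices; a nonempty RANS is the union of its three sub-RANS glued along the
sub-triangles. -/
def ransRel : (t : Tern) → Vtx t → Vtx t → Prop
  | .leaf => fun x y => x ≠ y
  | .node a b c => fun x y =>
      (∃ p q, ransRel a p q ∧ emb1 p = x ∧ emb1 q = y) ∨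
      (∃ p q, ransRel b p q ∧ emb2 p = x ∧ emb2 q = y) ∨
      (∃ p q, ransRel c p q ∧ emb3 p = x ∧ emb3 q = y)

/-- The graph of a RANS. -/
def ransGraph (t : Tern) : SimpleGraph (Vtx t) := SimpleGraph.fromRel (ransRel t)

open SimpleGraph

section Aux

/-! ### Projections inverse to the embeddings -/

def pi1 {a b c : Tern} : Vtx (Tern.node a b c) → Option (Vtx a) := fun x =>
  match x with
  | .inl i => if i = 0 then none else some (.inl i)
  | .inr (.inl ()) => some (.inl 0)
  | .inr (.inr (.inl p)) => some (.inr p)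
  | .inr (.inr (.inr _)) => none

def pi2 {a b c : Tern} : Vtx (Tern.node a b c) → Option (Vtx b) := fun x =>
  match x with
  | .inl i => if i = 1 then none else some (.inl i)
  | .inr (.inl ()) => some (.inl 1)
  | .inr (.inr (.inl _)) => none
  | .inr (.inr (.inr (.inl p))) => some (.inr p)
  | .inr (.inr (.inr (.inr _))) => none

def pi3 {a b c : Tern} : Vtx (Tern.node a b c) → Option (Vtx c) := fun x =>
  match x with
  | .inl i => if i = 2 then none else some (.inl i)
  | .inr (.inl ()) => some (.inl 2)
  | .inr (.inr (.inl _)) => none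
  | .inr (.inr (.inr (.inl _))) => none
  | .inr (.inr (.inr (.inr p))) => some (.inr p)

variable {a b c : Tern}

lemma pi1_emb1 : ∀ x : Vtx a, pi1 (a := a) (b := b) (c := c) (emb1 x) = some x := by
  rintro (i | p)
  · fin_cases i <;> rfl
  · rfl

lemma pi2_emb2 : ∀ x : Vtx b, pi2 (a := a) (b := b) (c := c) (emb2 x) = some x := by
  rintro (i | p)
  · fin_cases i <;> rfl
  · rfl

lemma pi3_emb3 : ∀ x : Vtx c, pi3 (a := a) (b := b) (c := c) (emb3 x) = some x := by
  rintro (i | p)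
  · fin_cases i <;> rfl
  · rfl

lemma emb1_inj : Function.Injective (emb1 (a := a) (b := b) (c := c)) := by
  intro x y h
  have := congrArg pi1 h
  rwa [pi1_emb1, pi1_emb1, Option.some_inj] at this

lemma emb2_inj : Function.Injective (emb2 (a := a) (b := b) (c := c)) := by
  intro x y h
  have := congrArg pi2 h
  rwa [pi2_emb2, pi2_emb2, Option.some_inj] at this

lemma emb3_inj : Function.Injective (emb3 (a := a) (b := b) (c := c)) := by
  intro x y h
  have := congrArg pi3 h
  rwa [pi3_emb3, pi3_emb3, Option.some_inj] at this

@[simp] lemma emb1_inl0 : emb1 (a := a) (b := b) (c := c) (Sum.inl 0) = Sum.inr (Sum.inl ()) := rfl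
@[simp] lemma emb1_inl1 : emb1 (a := a) (b := b) (c := c) (Sum.inl 1) = Sum.inl 1 := rfl
@[simp] lemma emb1_inl2 : emb1 (a := a) (b := b) (c := c) (Sum.inl 2) = Sum.inl 2 := rfl
@[simp] lemma emb1_inr (p : Pos a) :
    emb1 (a := a) (b := b) (c := c) (Sum.inr p) = Sum.inr (Sum.inr (Sum.inl p)) := rfl
@[simp] lemma emb2_inl0 : emb2 (a := a) (b := b) (c := c) (Sum.inl 0) = Sum.inl 0 := rfl
@[simp] lemma emb2_inl1 : emb2 (a := a) (b := b) (c := c) (Sum.inl 1) = Sum.inr (Sum.inl ()) := rfl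
@[simp] lemma emb2_inl2 : emb2 (a := a) (b := b) (c := c) (Sum.inl 2) = Sum.inl 2 := rfl
@[simp] lemma emb2_inr (p : Pos b) :
    emb2 (a := a) (b := b) (c := c) (Sum.inr p) = Sum.inr (Sum.inr (Sum.inr (Sum.inl p))) := rfl
@[simp] lemma emb3_inl0 : emb3 (a := a) (b := b) (c := c) (Sum.inl 0) = Sum.inl 0 := rfl
@[simp] lemma emb3_inl1 : emb3 (a := a) (b := b) (c := c) (Sum.inl 1) = Sum.inl 1 := rfl
@[simp] lemma emb3_inl2 : emb3 (a := a) (b := b) (c := c) (Sum.inl 2) = Sum.inr (Sum.inl ()) := rfl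
@[simp] lemma emb3_inr (p : Pos c) :
    emb3 (a := a) (b := b) (c := c) (Sum.inr p) = Sum.inr (Sum.inr (Sum.inr (Sum.inr p))) := rfl

lemma adj_emb1 {x y : Vtx a} (h : (ransGraph a).Adj x y) :
    (ransGraph (Tern.node a b c)).Adj (emb1 x) (emb1 y) := by
  rw [ransGraph, SimpleGraph.fromRel_adj] at h ⊢
  obtain ⟨hne, h | h⟩ := h
  · exact ⟨fun he => hne (emb1_inj he), Or.inl (Or.inl ⟨x, y, h, rfl, rfl⟩)⟩
  · exact ⟨fun he => hne (emb1_inj he), Or.inr (Or.inl ⟨y, x, h, rfl, rfl⟩)⟩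

lemma adj_emb2 {x y : Vtx b} (h : (ransGraph b).Adj x y) :
    (ransGraph (Tern.node a b c)).Adj (emb2 x) (emb2 y) := by
  rw [ransGraph, SimpleGraph.fromRel_adj] at h ⊢
  obtain ⟨hne, h | h⟩ := h
  · exact ⟨fun he => hne (emb2_inj he), Or.inl (Or.inr (Or.inl ⟨x, y, h, rfl, rfl⟩))⟩
  · exact ⟨fun he => hne (emb2_inj he), Or.inr (Or.inr (Or.inl ⟨y, x, h, rfl, rfl⟩))⟩

lemma adj_emb3 {x y : Vtx c} (h : (ransGraph c).Adj x y) :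
    (ransGraph (Tern.node a b c)).Adj (emb3 x) (emb3 y) := by
  rw [ransGraph, SimpleGraph.fromRel_adj] at h ⊢
  obtain ⟨hne, h | h⟩ := h
  · exact ⟨fun he => hne (emb3_inj he), Or.inl (Or.inr (Or.inr ⟨x, y, h, rfl, rfl⟩))⟩
  · exact ⟨fun he => hne (emb3_inj he), Or.inr (Or.inr (Or.inr ⟨y, x, h, rfl, rfl⟩))⟩

/-- All outermost vertices are pairwise adjacent. -/
lemma outer_adj : ∀ (t : Tern) (i j : Fin 3), i ≠ j →
    (ransGraph t).Adj (Sum.inl i) (Sum.inl j) := by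
  intro t
  induction t with
  | leaf =>
      intro i j hij
      rw [ransGraph]; refine (SimpleGraph.fromRel_adj ..).mpr ?_
      have h : (Sum.inl i : Vtx Tern.leaf) ≠ Sum.inl j := fun h => hij (by injection h)
      exact ⟨h, Or.inl h⟩
  | node a b c iha ihb ihc =>
      intro i j hij
      fin_cases i <;> fin_cases j <;> first
        | exact absurd rfl hij
        | (first
          | exact (by simpa using adj_emb3 (a := a) (b := b) (ihc 0 1 (by decide)))
          | exact (by simpa using adj_emb2 (a := a) (c := c) (ihb 0 2 (by decide)))
          | exact (by simpa using adj_emb3 (a := a) (b := b) (ihc 1 0 (by decide)))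
          | exact (by simpa using adj_emb1 (b := b) (c := c) (iha 1 2 (by decide)))
          | exact (by simpa using adj_emb2 (a := a) (c := c) (ihb 2 0 (by decide)))
          | exact (by simpa using adj_emb1 (b := b) (c := c) (iha 2 1 (by decide))))

lemma center_adj (i : Fin 3) :
    (ransGraph (Tern.node a b c)).Adj (Sum.inr (Sum.inl ())) (Sum.inl i) := by
  by_cases h : i = 0
  · subst h
    exact adj_emb2 (a := a) (c := c) (outer_adj b 1 0 (by decide))
  · have h2 := adj_emb1 (b := b) (c := c) (outer_adj a 0 i (Ne.symm h))
    rw [emb1_inl0] at h2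
    rwa [show emb1 (a := a) (b := b) (c := c) (Sum.inl i) = Sum.inl i by
      simp [emb1, h]; rfl] at h2

lemma reach_emb1 {x y : Vtx a} (h : (ransGraph a).Reachable x y) :
    (ransGraph (Tern.node a b c)).Reachable (emb1 x) (emb1 y) :=
  SimpleGraph.Reachable.map
    (⟨emb1, fun h => adj_emb1 h⟩ : ransGraph a →g ransGraph (Tern.node a b c)) h

lemma reach_emb2 {x y : Vtx b} (h : (ransGraph b).Reachable x y) :
    (ransGraph (Tern.node a b c)).Reachable (emb2 x) (emb2 y) :=
  SimpleGraph.Reachable.map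
    (⟨emb2, fun h => adj_emb2 h⟩ : ransGraph b →g ransGraph (Tern.node a b c)) h

lemma reach_emb3 {x y : Vtx c} (h : (ransGraph c).Reachable x y) :
    (ransGraph (Tern.node a b c)).Reachable (emb3 x) (emb3 y) :=
  SimpleGraph.Reachable.map
    (⟨emb3, fun h => adj_emb3 h⟩ : ransGraph c →g ransGraph (Tern.node a b c)) h

/-- RANS graphs are connected. -/
lemma rans_conn : ∀ t : Tern, (ransGraph t).Connected := by
  intro t
  induction t with
  | leaf =>
      rw [SimpleGraph.connected_iff]
      refine ⟨fun x y => ?_, ⟨Sum.inl 0⟩⟩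
      by_cases h : x = y
      · exact h ▸ SimpleGraph.Reachable.refl x
      · refine SimpleGraph.Adj.reachable ?_
        rw [ransGraph, SimpleGraph.fromRel_adj]
        exact ⟨h, Or.inl h⟩
  | node a b c iha ihb ihc =>
      rw [SimpleGraph.connected_iff]
      refine ⟨fun x y => ?_, ⟨Sum.inl 0⟩⟩
      have key : ∀ v : Vtx (Tern.node a b c),
          (ransGraph (Tern.node a b c)).Reachable v (Sum.inl 1) := by
        have h01 : (ransGraph (Tern.node a b c)).Reachable (Sum.inl 0) (Sum.inl 1) :=
          (outer_adj _ 0 1 (by decide)).reachable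
        rintro (i | (⟨⟩ | (p | (p | p))))
        · by_cases h : i = 1
          · exact h ▸ SimpleGraph.Reachable.refl _
          · exact ((outer_adj _ i 1 h)).reachable
        · exact reach_emb1 (b := b) (c := c) ((iha.preconnected) (Sum.inl 0) (Sum.inl 1))
        · exact reach_emb1 (b := b) (c := c) ((iha.preconnected) (Sum.inr p) (Sum.inl 1))
        · refine SimpleGraph.Reachable.trans ?_ h01
          exact reach_emb2 (a := a) (c := c) ((ihb.preconnected) (Sum.inr p) (Sum.inl 0))
        · refine SimpleGraph.Reachable.trans ?_ h01
          exact reach_emb3 (a := a) (b := b) ((ihc.preconnected) (Sum.inr p) (Sum.inl 0))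
      exact (key x).trans (key y).symm

/-! ### The cone over the outer triangle, and the key distance lemma -/

variable {V W : Type}

/-- The cone graph: `A` plus a new apex `none` joined to the three
distinguished vertices `O j`. -/
def cone (A : SimpleGraph V) (O : Fin 3 → V) : SimpleGraph (Option V) :=
  SimpleGraph.fromRel (fun x y =>
    (∃ u v, x = some u ∧ y = some v ∧ A.Adj u v) ∨ (x = none ∧ ∃ j, y = some (O j)))

/-- Mapping walks through a map that sends edges to edges or collapses them. -/
lemma walk_map_le {G : SimpleGraph V} {G' : SimpleGraph W} (f : V → W)
    (hf : ∀ ⦃u v⦄, G.Adj u v → G'.Adj (f u) (f v) ∨ f u = f v) :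
    ∀ {u v : V} (p : G.Walk u v), ∃ q : G'.Walk (f u) (f v), q.length ≤ p.length := by
  intro u v p
  induction p with
  | nil => exact ⟨.nil, le_rfl⟩
  | cons h p ih =>
      obtain ⟨q, hq⟩ := ih
      rcases hf h with h' | h'
      · exact ⟨.cons h' q, by simp; omega⟩
      · exact ⟨q.copy h'.symm rfl, by simp; omega⟩

lemma cone_step {A : SimpleGraph V} {O : Fin 3 → V}
    (hadj : ∀ j j', O j ≠ O j' → A.Adj (O j) (O j'))
    {x y : Option V}
    (hx : x = none ∨ ∃ j, x = some (O j)) (hy : y = none ∨ ∃ j, y = some (O j)) :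
    (cone A O).Adj x y ∨ x = y := by
  by_cases h : x = y
  · exact Or.inr h
  · left
    rw [cone, SimpleGraph.fromRel_adj]
    rcases hx with rfl | ⟨j, rfl⟩
    · rcases hy with rfl | ⟨j', rfl⟩
      · exact absurd rfl h
      · exact ⟨h, Or.inl (Or.inr ⟨rfl, j', rfl⟩)⟩
    · rcases hy with rfl | ⟨j', rfl⟩
      · exact ⟨h, Or.inr (Or.inr ⟨rfl, j, rfl⟩)⟩
      · refine ⟨h, Or.inl (Or.inl ⟨O j, O j', rfl, rfl, hadj j j' ?_⟩)⟩
        exact fun he => h (by rw [he])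

lemma cone_adj_some {A : SimpleGraph V} {O : Fin 3 → V} {u v : V}
    (h : A.Adj u v) : (cone A O).Adj (some u) (some v) := by
  rw [cone, SimpleGraph.fromRel_adj]
  exact ⟨fun he => h.ne (by injection he), Or.inl (Or.inl ⟨u, v, rfl, rfl, h⟩)⟩

/-- Lower bound: every walk in the cone from `some v` to the apex has length at
least `1 + min_j d(v, O j)`. -/
lemma cone_lower {A : SimpleGraph V} (hA : A.Connected) {O : Fin 3 → V} :
    ∀ {z z' : Option V} (p : (cone A O).Walk z z') {v : V}, z = some v → z' = none →
      1 + min (A.dist v (O 0)) (min (A.dist v (O 1)) (A.dist v (O 2))) ≤ p.length := by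
  intro z z' p
  induction p with
  | nil => intro v hv hv'; rw [hv'] at hv; exact absurd hv (by simp)
  | @cons z y _ h p ih =>
      intro v hv hv'
      subst hv hv'
      rw [cone, SimpleGraph.fromRel_adj] at h
      obtain ⟨hne, h | h⟩ := h
      · rcases h with ⟨u', v', hu, hv, hadj⟩ | ⟨h0, _⟩
        · -- y = some v', A.Adj v v'
          obtain rfl : v = u' := by injection hu
          subst hv
          have hstep : ∀ j : Fin 3, A.dist v (O j) ≤ 1 + A.dist v' (O j) := by
            intro j
            calc A.dist v (O j) ≤ A.dist v v' + A.dist v' (O j) := hA.dist_triangle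
            _ ≤ 1 + A.dist v' (O j) := by
                have : A.dist v v' = 1 := SimpleGraph.dist_eq_one_iff_adj.mpr hadj
                omega
          have h0 := hstep 0; have h1 := hstep 1; have h2 := hstep 2
          have := ih rfl rfl
          simp only [SimpleGraph.Walk.length_cons]
          omega
        · exact absurd h0 (by simp)
      · rcases h with ⟨u', v', hu, hv, hadj⟩ | ⟨h0, j, hj⟩
        · obtain rfl : v = v' := by injection hv
          subst hu
          have hstep : ∀ j : Fin 3, A.dist v (O j) ≤ 1 + A.dist u' (O j) := by
            intro j
            calc A.dist v (O j) ≤ A.dist v u' + A.dist u' (O j) := hA.dist_triangle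
            _ ≤ 1 + A.dist u' (O j) := by
                have : A.dist v u' = 1 := SimpleGraph.dist_eq_one_iff_adj.mpr hadj.symm
                omega
          have h0 := hstep 0; have h1 := hstep 1; have h2 := hstep 2
          have := ih rfl rfl
          simp only [SimpleGraph.Walk.length_cons]
          omega
        · -- y = none, v = O j
          obtain rfl : v = O j := by injection hj
          have : A.dist (O j) (O j) = 0 := SimpleGraph.dist_self
          have hm : min (A.dist (O j) (O 0)) (min (A.dist (O j) (O 1)) (A.dist (O j) (O 2))) = 0 := by
            fin_cases j <;> simp_all
          simp only [SimpleGraph.Walk.length_cons]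
          omega

/-- The key abstract lemma. -/
lemma key_dist {A : SimpleGraph V} (hA : A.Connected) (O : Fin 3 → V)
    {T : SimpleGraph W} (hT : T.Connected) (e : V → W)
    (he : ∀ ⦃u v⦄, A.Adj u v → T.Adj (e u) (e v)) (o : W)
    (ho : ∀ j, T.Adj (e (O j)) o) (π : W → Option V)
    (hπe : ∀ v, π (e v) = some v) (hπo : π o = none)
    (hhom : ∀ ⦃u v⦄, T.Adj u v → (cone A O).Adj (π u) (π v) ∨ π u = π v)
    (x : V) :
    T.dist (e x) o =
      1 + min (A.dist x (O 0)) (min (A.dist x (O 1)) (A.dist x (O 2))) := by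
  have hub : ∀ j : Fin 3, T.dist (e x) o ≤ 1 + A.dist x (O j) := by
    intro j
    have h1 : T.dist (e x) (e (O j)) ≤ A.dist x (O j) := by
      obtain ⟨p, hp⟩ := hA.exists_walk_length_eq_dist x (O j)
      obtain ⟨q, hq⟩ := walk_map_le e (fun u v h => Or.inl (he h)) p
      calc T.dist (e x) (e (O j)) ≤ q.length := SimpleGraph.dist_le q
      _ ≤ p.length := hq
      _ = A.dist x (O j) := hp
    have h2 : T.dist (e (O j)) o = 1 := SimpleGraph.dist_eq_one_iff_adj.mpr (ho j)
    have := hT.dist_triangle (v := e (O j)) (u := e x) (w := o)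
    omega
  have hub0 := hub 0; have hub1 := hub 1; have hub2 := hub 2
  have hlb : 1 + min (A.dist x (O 0)) (min (A.dist x (O 1)) (A.dist x (O 2))) ≤
      T.dist (e x) o := by
    obtain ⟨p, hp⟩ := hT.exists_walk_length_eq_dist (e x) o
    obtain ⟨q, hq⟩ := walk_map_le π hhom p
    have := cone_lower hA q (hπe x) hπo
    omega
  omega


/-! ### Instantiations for the three sub-RANS -/

section Inst

variable {a b c : Tern}

lemma pi1_emb2_cases : ∀ x : Vtx b, pi1 (a := a) (c := c) (emb2 x) = none ∨
    ∃ j : Fin 3, pi1 (a := a) (c := c) (emb2 x) = some (Sum.inl j) := by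
  rintro (i | p)
  · fin_cases i
    · exact Or.inl rfl
    · exact Or.inr ⟨0, rfl⟩
    · exact Or.inr ⟨2, rfl⟩
  · exact Or.inl rfl

lemma pi1_emb3_cases : ∀ x : Vtx c, pi1 (a := a) (b := b) (emb3 x) = none ∨
    ∃ j : Fin 3, pi1 (a := a) (b := b) (emb3 x) = some (Sum.inl j) := by
  rintro (i | p)
  · fin_cases i
    · exact Or.inl rfl
    · exact Or.inr ⟨1, rfl⟩
    · exact Or.inr ⟨0, rfl⟩
  · exact Or.inl rfl

lemma pi2_emb1_cases : ∀ x : Vtx a, pi2 (b := b) (c := c) (emb1 x) = none ∨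
    ∃ j : Fin 3, pi2 (b := b) (c := c) (emb1 x) = some (Sum.inl j) := by
  rintro (i | p)
  · fin_cases i
    · exact Or.inr ⟨1, rfl⟩
    · exact Or.inl rfl
    · exact Or.inr ⟨2, rfl⟩
  · exact Or.inl rfl

lemma pi2_emb3_cases : ∀ x : Vtx c, pi2 (a := a) (b := b) (emb3 x) = none ∨
    ∃ j : Fin 3, pi2 (a := a) (b := b) (emb3 x) = some (Sum.inl j) := by
  rintro (i | p)
  · fin_cases i
    · exact Or.inr ⟨0, rfl⟩
    · exact Or.inl rfl
    · exact Or.inr ⟨1, rfl⟩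
  · exact Or.inl rfl

lemma pi3_emb1_cases : ∀ x : Vtx a, pi3 (b := b) (c := c) (emb1 x) = none ∨
    ∃ j : Fin 3, pi3 (b := b) (c := c) (emb1 x) = some (Sum.inl j) := by
  rintro (i | p)
  · fin_cases i
    · exact Or.inr ⟨2, rfl⟩
    · exact Or.inr ⟨1, rfl⟩
    · exact Or.inl rfl
  · exact Or.inl rfl

lemma pi3_emb2_cases : ∀ x : Vtx b, pi3 (a := a) (c := c) (emb2 x) = none ∨
    ∃ j : Fin 3, pi3 (a := a) (c := c) (emb2 x) = some (Sum.inl j) := by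
  rintro (i | p)
  · fin_cases i
    · exact Or.inr ⟨0, rfl⟩
    · exact Or.inr ⟨2, rfl⟩
    · exact Or.inl rfl
  · exact Or.inl rfl

/-- The distinguished outer vertices. -/
def OO (t : Tern) : Fin 3 → Vtx t := fun j => Sum.inl j

lemma OO_adj (t : Tern) : ∀ j j' : Fin 3, OO t j ≠ OO t j' →
    (ransGraph t).Adj (OO t j) (OO t j') :=
  fun j j' h => outer_adj t j j' (fun e => h (congrArg _ e))

lemma hhom1_rel {u v : Vtx (Tern.node a b c)} (h : ransRel (Tern.node a b c) u v) :
    (cone (ransGraph a) (OO a)).Adj (pi1 u) (pi1 v) ∨ pi1 u = pi1 v := by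
  rcases h with ⟨p, q, hr, rfl, rfl⟩ | ⟨p, q, hr, rfl, rfl⟩ | ⟨p, q, hr, rfl, rfl⟩
  · rw [pi1_emb1, pi1_emb1]
    by_cases hpq : p = q
    · exact Or.inr (by rw [hpq])
    · refine Or.inl (cone_adj_some ?_)
      rw [ransGraph, SimpleGraph.fromRel_adj]
      exact ⟨hpq, Or.inl hr⟩
  · exact cone_step (OO_adj a) (pi1_emb2_cases p) (pi1_emb2_cases q)
  · exact cone_step (OO_adj a) (pi1_emb3_cases p) (pi1_emb3_cases q)

lemma hhom2_rel {u v : Vtx (Tern.node a b c)} (h : ransRel (Tern.node a b c) u v) :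
    (cone (ransGraph b) (OO b)).Adj (pi2 u) (pi2 v) ∨ pi2 u = pi2 v := by
  rcases h with ⟨p, q, hr, rfl, rfl⟩ | ⟨p, q, hr, rfl, rfl⟩ | ⟨p, q, hr, rfl, rfl⟩
  · exact cone_step (OO_adj b) (pi2_emb1_cases p) (pi2_emb1_cases q)
  · rw [pi2_emb2, pi2_emb2]
    by_cases hpq : p = q
    · exact Or.inr (by rw [hpq])
    · refine Or.inl (cone_adj_some ?_)
      rw [ransGraph, SimpleGraph.fromRel_adj]
      exact ⟨hpq, Or.inl hr⟩
  · exact cone_step (OO_adj b) (pi2_emb3_cases p) (pi2_emb3_cases q)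

lemma hhom3_rel {u v : Vtx (Tern.node a b c)} (h : ransRel (Tern.node a b c) u v) :
    (cone (ransGraph c) (OO c)).Adj (pi3 u) (pi3 v) ∨ pi3 u = pi3 v := by
  rcases h with ⟨p, q, hr, rfl, rfl⟩ | ⟨p, q, hr, rfl, rfl⟩ | ⟨p, q, hr, rfl, rfl⟩
  · exact cone_step (OO_adj c) (pi3_emb1_cases p) (pi3_emb1_cases q)
  · exact cone_step (OO_adj c) (pi3_emb2_cases p) (pi3_emb2_cases q)
  · rw [pi3_emb3, pi3_emb3]
    by_cases hpq : p = q
    · exact Or.inr (by rw [hpq])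
    · refine Or.inl (cone_adj_some ?_)
      rw [ransGraph, SimpleGraph.fromRel_adj]
      exact ⟨hpq, Or.inl hr⟩

lemma hhom1 : ∀ ⦃u v : Vtx (Tern.node a b c)⦄, (ransGraph (Tern.node a b c)).Adj u v →
    (cone (ransGraph a) (OO a)).Adj (pi1 u) (pi1 v) ∨ pi1 u = pi1 v := by
  intro u v h
  rw [ransGraph, SimpleGraph.fromRel_adj] at h
  obtain ⟨hne, h | h⟩ := h
  · exact hhom1_rel h
  · rcases hhom1_rel h with h' | h'
    · exact Or.inl h'.symm
    · exact Or.inr h'.symm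

lemma hhom2 : ∀ ⦃u v : Vtx (Tern.node a b c)⦄, (ransGraph (Tern.node a b c)).Adj u v →
    (cone (ransGraph b) (OO b)).Adj (pi2 u) (pi2 v) ∨ pi2 u = pi2 v := by
  intro u v h
  rw [ransGraph, SimpleGraph.fromRel_adj] at h
  obtain ⟨hne, h | h⟩ := h
  · exact hhom2_rel h
  · rcases hhom2_rel h with h' | h'
    · exact Or.inl h'.symm
    · exact Or.inr h'.symm

lemma hhom3 : ∀ ⦃u v : Vtx (Tern.node a b c)⦄, (ransGraph (Tern.node a b c)).Adj u v →
    (cone (ransGraph c) (OO c)).Adj (pi3 u) (pi3 v) ∨ pi3 u = pi3 v := by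
  intro u v h
  rw [ransGraph, SimpleGraph.fromRel_adj] at h
  obtain ⟨hne, h | h⟩ := h
  · exact hhom3_rel h
  · rcases hhom3_rel h with h' | h'
    · exact Or.inl h'.symm
    · exact Or.inr h'.symm

lemma dist1 (x : Vtx a) :
    (ransGraph (Tern.node a b c)).dist (emb1 x) (Sum.inl 0) =
      1 + min ((ransGraph a).dist x (Sum.inl 0))
          (min ((ransGraph a).dist x (Sum.inl 1)) ((ransGraph a).dist x (Sum.inl 2))) := by
  have := key_dist (rans_conn a) (OO a) (rans_conn (Tern.node a b c))
    (emb1 (b := b) (c := c)) (fun u v h => adj_emb1 h) (Sum.inl 0)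
    (fun j => by
      fin_cases j
      · exact center_adj (a := a) (b := b) (c := c) 0
      · exact outer_adj (Tern.node a b c) 1 0 (by decide)
      · exact outer_adj (Tern.node a b c) 2 0 (by decide))
    pi1 pi1_emb1 rfl hhom1 x
  simpa [OO] using this

lemma dist2 (x : Vtx b) :
    (ransGraph (Tern.node a b c)).dist (emb2 x) (Sum.inl 1) =
      1 + min ((ransGraph b).dist x (Sum.inl 0))
          (min ((ransGraph b).dist x (Sum.inl 1)) ((ransGraph b).dist x (Sum.inl 2))) := by
  have := key_dist (rans_conn b) (OO b) (rans_conn (Tern.node a b c))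
    (emb2 (a := a) (c := c)) (fun u v h => adj_emb2 h) (Sum.inl 1)
    (fun j => by
      fin_cases j
      · exact outer_adj (Tern.node a b c) 0 1 (by decide)
      · exact center_adj (a := a) (b := b) (c := c) 1
      · exact outer_adj (Tern.node a b c) 2 1 (by decide))
    pi2 pi2_emb2 rfl hhom2 x
  simpa [OO] using this

lemma dist3 (x : Vtx c) :
    (ransGraph (Tern.node a b c)).dist (emb3 x) (Sum.inl 2) =
      1 + min ((ransGraph c).dist x (Sum.inl 0))
          (min ((ransGraph c).dist x (Sum.inl 1)) ((ransGraph c).dist x (Sum.inl 2))) := by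
  have := key_dist (rans_conn c) (OO c) (rans_conn (Tern.node a b c))
    (emb3 (a := a) (b := b)) (fun u v h => adj_emb3 h) (Sum.inl 2)
    (fun j => by
      fin_cases j
      · exact outer_adj (Tern.node a b c) 0 2 (by decide)
      · exact outer_adj (Tern.node a b c) 1 2 (by decide)
      · exact center_adj (a := a) (b := b) (c := c) 2)
    pi3 pi3_emb3 rfl hhom3 x
  simpa [OO] using this

end Inst
end Aux

/-- In any nonempty RANS, the center is adjacent to all three outermost
vertices, and every internal vertex `w` of the sub-RANS `Sᵢ` has distance at
least 2 to the opposite outermost vertex `Oᵢ`, the distance being exactly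
`1 + d(w, O(Sᵢ))` where `O(Sᵢ)` is the set of outermost vertices of `Sᵢ`. -/
theorem center_adjacent_and_subRANS_distance (a b c : Tern) :
    let t := Tern.node a b c
    let center : Vtx t := Sum.inr (Sum.inl ())
    (∀ i : Fin 3, (ransGraph t).Adj center (Sum.inl i)) ∧
    (∀ w : Pos a,
        2 ≤ (ransGraph t).dist (emb1 (Sum.inr w)) (Sum.inl 0) ∧
        (ransGraph t).dist (emb1 (Sum.inr w)) (Sum.inl 0) =
          1 + min ((ransGraph a).dist (Sum.inr w) (Sum.inl 0))
              (min ((ransGraph a).dist (Sum.inr w) (Sum.inl 1))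
                ((ransGraph a).dist (Sum.inr w) (Sum.inl 2)))) ∧
    (∀ w : Pos b,
        2 ≤ (ransGraph t).dist (emb2 (Sum.inr w)) (Sum.inl 1) ∧
        (ransGraph t).dist (emb2 (Sum.inr w)) (Sum.inl 1) =
          1 + min ((ransGraph b).dist (Sum.inr w) (Sum.inl 0))
              (min ((ransGraph b).dist (Sum.inr w) (Sum.inl 1))
                ((ransGraph b).dist (Sum.inr w) (Sum.inl 2)))) ∧
    (∀ w : Pos c,
        2 ≤ (ransGraph t).dist (emb3 (Sum.inr w)) (Sum.inl 2) ∧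
        (ransGraph t).dist (emb3 (Sum.inr w)) (Sum.inl 2) =
          1 + min ((ransGraph c).dist (Sum.inr w) (Sum.inl 0))
              (min ((ransGraph c).dist (Sum.inr w) (Sum.inl 1))
                ((ransGraph c).dist (Sum.inr w) (Sum.inl 2)))) := by
  intro t center
  refine ⟨center_adj, fun w => ?_, fun w => ?_, fun w => ?_⟩
  · have heq := dist1 (b := b) (c := c) (Sum.inr w)
    refine ⟨?_, heq⟩
    have h0 : 0 < (ransGraph a).dist (Sum.inr w) (Sum.inl 0) := (rans_conn a).pos_dist_of_ne
      (u := (Sum.inr w : Vtx a)) (v := Sum.inl 0) (by simp)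
    have h1 : 0 < (ransGraph a).dist (Sum.inr w) (Sum.inl 1) := (rans_conn a).pos_dist_of_ne
      (u := (Sum.inr w : Vtx a)) (v := Sum.inl 1) (by simp)
    have h2 : 0 < (ransGraph a).dist (Sum.inr w) (Sum.inl 2) := (rans_conn a).pos_dist_of_ne
      (u := (Sum.inr w : Vtx a)) (v := Sum.inl 2) (by simp)
    have hge : 2 ≤ 1 + min ((ransGraph a).dist (Sum.inr w) (Sum.inl 0))
        (min ((ransGraph a).dist (Sum.inr w) (Sum.inl 1))
          ((ransGraph a).dist (Sum.inr w) (Sum.inl 2))) := by omega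
    exact le_of_le_of_eq hge heq.symm
  · have heq := dist2 (a := a) (c := c) (Sum.inr w)
    refine ⟨?_, heq⟩
    have h0 : 0 < (ransGraph b).dist (Sum.inr w) (Sum.inl 0) := (rans_conn b).pos_dist_of_ne
      (u := (Sum.inr w : Vtx b)) (v := Sum.inl 0) (by simp)
    have h1 : 0 < (ransGraph b).dist (Sum.inr w) (Sum.inl 1) := (rans_conn b).pos_dist_of_ne
      (u := (Sum.inr w : Vtx b)) (v := Sum.inl 1) (by simp)
    have h2 : 0 < (ransGraph b).dist (Sum.inr w) (Sum.inl 2) := (rans_conn b).pos_dist_of_ne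
      (u := (Sum.inr w : Vtx b)) (v := Sum.inl 2) (by simp)
    have hge : 2 ≤ 1 + min ((ransGraph b).dist (Sum.inr w) (Sum.inl 0))
        (min ((ransGraph b).dist (Sum.inr w) (Sum.inl 1))
          ((ransGraph b).dist (Sum.inr w) (Sum.inl 2))) := by omega
    exact le_of_le_of_eq hge heq.symm
  · have heq := dist3 (a := a) (b := b) (Sum.inr w)
    refine ⟨?_, heq⟩
    have h0 : 0 < (ransGraph c).dist (Sum.inr w) (Sum.inl 0) := (rans_conn c).pos_dist_of_ne
      (u := (Sum.inr w : Vtx c)) (v := Sum.inl 0) (by simp)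
    have h1 : 0 < (ransGraph c).dist (Sum.inr w) (Sum.inl 1) := (rans_conn c).pos_dist_of_ne
      (u := (Sum.inr w : Vtx c)) (v := Sum.inl 1) (by simp)
    have h2 : 0 < (ransGraph c).dist (Sum.inr w) (Sum.inl 2) := (rans_conn c).pos_dist_of_ne
      (u := (Sum.inr w : Vtx c)) (v := Sum.inl 2) (by simp)
    have hge : 2 ≤ 1 + min ((ransGraph c).dist (Sum.inr w) (Sum.inl 0))
        (min ((ransGraph c).dist (Sum.inr w) (Sum.inl 1))
          ((ransGraph c).dist (Sum.inr w) (Sum.inl 2))) := by omega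
    exact le_of_le_of_eq hge heq.symm
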